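/- Let (Ω, ℱ, P) and (S, Σ, ν) be finite measure spaces. Let (f_k)_{k∈ℕ} be a sequence of (ℱ ⊗ Σ)-measurable functions from Ω × S to ℝ with sup_k ∫_{Ω×S} |f_k|² d(P ⊗ ν) < ∞, and let f : Ω × S → ℝ be square-integrable with respect to P ⊗ ν. Suppose that for P-a.e. ω ∈ Ω, f_k(ω, ·) converges to f(ω, ·) weakly in L²(S, ν), i.e. ∫_S f_k(ω, s) φ(s) dν(s) → ∫_S f(ω, s) φ(s) dν(s) for every φ ∈ L²(S, ν). Then f_k converges to f weakly in L²(Ω × S, P ⊗ ν): for every ψ ∈ L²(Ω × S, P ⊗ ν), ∫_{Ω×S} f_k ψ d(P ⊗ ν) → ∫_{Ω×S} f ψ d(P ⊗ ν). -/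

import Mathlib

open MeasureTheory Filter Set

open scoped ENNReal

private lemma sq_ennnorm_eq (x : ℝ) :
    (‖x‖₊ : ℝ≥0∞) ^ (2:ℝ) = ENNReal.ofReal (x ^ 2) := by
  rw [← enorm_eq_nnnorm, Real.enorm_eq_ofReal_abs, ENNReal.ofReal_rpow_of_nonneg (abs_nonneg x) (by norm_num)]
  congr 1
  rw [show (2:ℝ) = ((2:ℕ):ℝ) by norm_num, Real.rpow_natCast, sq_abs]

private lemma cs_pair {S : Type*} [MeasurableSpace S] (ν : Measure S) {u v : S → ℝ}
    (hu : AEStronglyMeasurable u ν) (hv : AEStronglyMeasurable v ν) :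
    (‖∫ s, u s * v s ∂ν‖₊ : ℝ≥0∞) ≤
      (∫⁻ s, (‖u s‖₊ : ℝ≥0∞) ^ (2:ℝ) ∂ν) ^ (1/2 : ℝ) *
      (∫⁻ s, (‖v s‖₊ : ℝ≥0∞) ^ (2:ℝ) ∂ν) ^ (1/2 : ℝ) := by
  have h2 : (2:ℝ).HolderConjugate 2 := Real.holderConjugate_iff.mpr ⟨one_lt_two, by norm_num⟩
  calc (‖∫ s, u s * v s ∂ν‖₊ : ℝ≥0∞)
      ≤ ∫⁻ s, ‖u s * v s‖₊ ∂ν := enorm_integral_le_lintegral_enorm _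
    _ = ∫⁻ s, ((fun s => (‖u s‖₊ : ℝ≥0∞)) * fun s => (‖v s‖₊ : ℝ≥0∞)) s ∂ν := by
        apply lintegral_congr; intro s; simp [nnnorm_mul]
    _ ≤ _ := ENNReal.lintegral_mul_le_Lp_mul_Lq ν h2 hu.aemeasurable.enorm hv.aemeasurable.enorm

theorem pathwise_weak_L2_convergence_implies_product_weak_L2_convergence
    {Ω S : Type*} [MeasurableSpace Ω] [MeasurableSpace S]
    (P : Measure Ω) [IsFiniteMeasure P] (ν : Measure S) [IsFiniteMeasure ν]
    (f : ℕ → Ω × S → ℝ)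
    (hfm : ∀ k, Measurable (f k))
    (hbd : ∃ C : ℝ, ∀ k, ∫⁻ p, ENNReal.ofReal (f k p ^ 2) ∂(P.prod ν) ≤ ENNReal.ofReal C)
    (g : Ω × S → ℝ)
    (hg : MemLp g 2 (P.prod ν))
    (hweak : ∀ᵐ ω ∂P, ∀ φ : S → ℝ, MemLp φ 2 ν →
      Tendsto (fun k => ∫ s, f k (ω, s) * φ s ∂ν) atTop
        (nhds (∫ s, g (ω, s) * φ s ∂ν))) :
    ∀ ψ : Ω × S → ℝ, MemLp ψ 2 (P.prod ν) →
      Tendsto (fun k => ∫ p, f k p * ψ p ∂(P.prod ν)) atTop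
        (nhds (∫ p, g p * ψ p ∂(P.prod ν))) := by
  intro ψ hψ
  obtain ⟨C, hC⟩ := hbd
  -- replace ψ by a strongly measurable representative ψ'
  set ψ' : Ω × S → ℝ := hψ.1.mk ψ with hψ'def
  have hψ'sm : StronglyMeasurable ψ' := hψ.1.stronglyMeasurable_mk
  have hψ'm : Measurable ψ' := hψ'sm.measurable
  have hψ'ae : ψ =ᵐ[P.prod ν] ψ' := hψ.1.ae_eq_mk
  have hψ'2 : MemLp ψ' 2 (P.prod ν) := hψ.ae_eq hψ'ae
  -- f k is in L² of the product
  have hfk_sq : ∀ k, ∫⁻ p, (‖f k p‖₊ : ℝ≥0∞) ^ (2:ℝ) ∂(P.prod ν) ≤ ENNReal.ofReal C := by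
    intro k
    calc ∫⁻ p, (‖f k p‖₊ : ℝ≥0∞) ^ (2:ℝ) ∂(P.prod ν)
        = ∫⁻ p, ENNReal.ofReal (f k p ^ 2) ∂(P.prod ν) := by
          apply lintegral_congr; intro p; exact sq_ennnorm_eq _
      _ ≤ ENNReal.ofReal C := hC k
  have hf2 : ∀ k, MemLp (f k) 2 (P.prod ν) := by
    intro k
    refine ⟨(hfm k).aestronglyMeasurable, ?_⟩
    rw [eLpNorm_lt_top_iff_lintegral_rpow_enorm_lt_top two_ne_zero ENNReal.ofNat_ne_top]
    have : (2:ℝ≥0∞).toReal = (2:ℝ) := by simp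
    rw [this]
    exact lt_of_le_of_lt (hfk_sq k) ENNReal.ofReal_lt_top
  -- integrability of the products on the product space
  have hmul : ∀ (u : Ω × S → ℝ), MemLp u 2 (P.prod ν) →
      Integrable (fun p => u p * ψ' p) (P.prod ν) := by
    intro u hu
    have h1 : (1:ℝ≥0∞)/1 = 1/2 + 1/2 := by
      rw [ENNReal.add_halves, div_one]
    haveI : ENNReal.HolderTriple 2 2 1 := ⟨by rw [ENNReal.inv_two_add_inv_two, inv_one]⟩
    have := hψ'2.smul (𝕜 := ℝ) (r := 1) hu
    rw [memLp_one_iff_integrable] at this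
    refine this.congr (Eventually.of_forall fun p => ?_)
    simp [Pi.smul_apply', smul_eq_mul, mul_comm]
  have hfψint : ∀ k, Integrable (fun p => f k p * ψ' p) (P.prod ν) := fun k => hmul _ (hf2 k)
  have hgψint : Integrable (fun p => g p * ψ' p) (P.prod ν) := hmul _ hg
  -- the pathwise pairings
  set G : ℕ → Ω → ℝ := fun k ω => ∫ s, f k (ω, s) * ψ' (ω, s) ∂ν with hGdef
  set G₀ : Ω → ℝ := fun ω => ∫ s, g (ω, s) * ψ' (ω, s) ∂ν with hG₀def
  have hGint : ∀ k, Integrable (G k) P := fun k => (hfψint k).integral_prod_left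
  have hG₀int : Integrable G₀ P := hgψint.integral_prod_left
  -- Fubini
  have hGfub : ∀ k, ∫ p, f k p * ψ' p ∂(P.prod ν) = ∫ ω, G k ω ∂P := fun k =>
    integral_prod _ (hfψint k)
  have hG₀fub : ∫ p, g p * ψ' p ∂(P.prod ν) = ∫ ω, G₀ ω ∂P := integral_prod _ hgψint
  -- the L²-norm functions
  set A : ℕ → Ω → ℝ≥0∞ := fun k ω => ∫⁻ s, (‖f k (ω, s)‖₊ : ℝ≥0∞) ^ (2:ℝ) ∂ν with hAdef
  set B : Ω → ℝ≥0∞ := fun ω => ∫⁻ s, (‖ψ' (ω, s)‖₊ : ℝ≥0∞) ^ (2:ℝ) ∂ν with hBdef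
  have hAmeas : ∀ k, Measurable (A k) := by
    intro k
    exact Measurable.lintegral_prod_right'
      (ENNReal.continuous_rpow_const.measurable.comp (hfm k).enorm)
  have hBmeas : Measurable B :=
    Measurable.lintegral_prod_right'
      (ENNReal.continuous_rpow_const.measurable.comp hψ'm.enorm)
  have hAint : ∀ k, ∫⁻ ω, A k ω ∂P ≤ ENNReal.ofReal C := by
    intro k
    have heq : ∫⁻ ω, A k ω ∂P = ∫⁻ p, (‖f k p‖₊ : ℝ≥0∞) ^ (2:ℝ) ∂(P.prod ν) :=
      (lintegral_prod _
        ((ENNReal.continuous_rpow_const.measurable.comp (hfm k).enorm)).aemeasurable).symm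
    rw [heq]
    exact hfk_sq k
  have hBint : ∫⁻ ω, B ω ∂P < ∞ := by
    have heq : ∫⁻ ω, B ω ∂P = ∫⁻ p, (‖ψ' p‖₊ : ℝ≥0∞) ^ (2:ℝ) ∂(P.prod ν) :=
      (lintegral_prod _
        ((ENNReal.continuous_rpow_const.measurable.comp hψ'm.enorm)).aemeasurable).symm
    rw [heq]
    have := hψ'2.2
    rw [eLpNorm_lt_top_iff_lintegral_rpow_enorm_lt_top two_ne_zero ENNReal.ofNat_ne_top] at this
    simp only [ENNReal.toReal_ofNat] at this
    exact this
  have hBlt : ∀ᵐ ω ∂P, B ω < ∞ := ae_lt_top hBmeas hBint.ne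
  -- a.e. slices of ψ' are in L²(ν)
  have hψslice : ∀ ω, AEStronglyMeasurable (fun s => ψ' (ω, s)) ν := fun ω =>
    (hψ'sm.comp_measurable measurable_prodMk_left).aestronglyMeasurable
  have hψmem : ∀ᵐ ω ∂P, MemLp (fun s => ψ' (ω, s)) 2 ν := by
    filter_upwards [hBlt] with ω hω
    refine ⟨hψslice ω, ?_⟩
    rw [eLpNorm_lt_top_iff_lintegral_rpow_enorm_lt_top two_ne_zero ENNReal.ofNat_ne_top]
    have h2 : (2:ℝ≥0∞).toReal = (2:ℝ) := by simp
    rw [h2]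
    exact hω
  -- a.e. convergence of the pathwise pairings
  have hae : ∀ᵐ ω ∂P, Tendsto (fun k => G k ω) atTop (nhds (G₀ ω)) := by
    filter_upwards [hweak, hψmem] with ω hω hmem
    exact hω _ hmem
  -- pointwise Cauchy–Schwarz bound
  have hGbd : ∀ k ω, (‖G k ω‖₊ : ℝ≥0∞) ≤ (A k ω) ^ (1/2:ℝ) * (B ω) ^ (1/2:ℝ) := by
    intro k ω
    exact cs_pair ν ((hfm k).comp measurable_prodMk_left).aestronglyMeasurable (hψslice ω)
  -- uniform integrability of G
  have hui : UnifIntegrable G 1 P := by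
    intro ε hε
    have hεpos : (ENNReal.ofReal ε) ≠ 0 := by
      simpa [ENNReal.ofReal_eq_zero, not_le] using hε
    set ε₂ : ℝ≥0∞ := (ENNReal.ofReal ε) ^ (2:ℝ) / (ENNReal.ofReal C + 1) with hε₂def
    have hε₂0 : ε₂ ≠ 0 := by
      apply ENNReal.div_ne_zero.mpr
      constructor
      · simp [ENNReal.rpow_eq_zero_iff, hεpos]
      · exact ENNReal.add_ne_top.mpr ⟨ENNReal.ofReal_ne_top, ENNReal.one_ne_top⟩
    obtain ⟨δ, hδ0, hδ⟩ := exists_pos_setLIntegral_lt_of_measure_lt hBint.ne hε₂0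
    set δr : ℝ := (min δ 1).toReal / 2 with hδrdef
    have hmin0 : min δ 1 ≠ 0 := (lt_min hδ0 zero_lt_one).ne'
    have hminT : min δ 1 ≠ ∞ :=
      (lt_of_le_of_lt (min_le_right _ _) ENNReal.one_lt_top).ne
    have hδr0 : 0 < δr := by
      rw [hδrdef]
      have := ENNReal.toReal_pos hmin0 hminT
      linarith
    refine ⟨δr, hδr0, fun k s hs hsle => ?_⟩
    -- the measure of s is small enough
    have hsδ : P s < δ := by
      calc P s ≤ ENNReal.ofReal δr := hsle
        _ = (min δ 1) / 2 := by
            rw [hδrdef, ENNReal.ofReal_div_of_pos (by norm_num),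
              ENNReal.ofReal_toReal hminT]
            norm_num
        _ < min δ 1 := ENNReal.half_lt_self hmin0 hminT
        _ ≤ δ := min_le_left _ _
    have hBs : ∫⁻ ω in s, B ω ∂P < ε₂ := hδ s hsδ
    -- estimate
    have h2 : (2:ℝ).HolderConjugate 2 := Real.holderConjugate_iff.mpr ⟨one_lt_two, by norm_num⟩
    have key : eLpNorm (s.indicator (G k)) 1 P ≤ ENNReal.ofReal ε := by
      rw [eLpNorm_one_eq_lintegral_enorm]
      calc ∫⁻ ω, ‖s.indicator (G k) ω‖₊ ∂P
          = ∫⁻ ω in s, (‖G k ω‖₊ : ℝ≥0∞) ∂P := by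
            rw [← lintegral_indicator hs]
            apply lintegral_congr; intro ω
            by_cases hω : ω ∈ s <;> simp [Set.indicator_apply, hω]
        _ ≤ ∫⁻ ω in s, ((fun ω => (A k ω) ^ (1/2:ℝ)) * fun ω => (B ω) ^ (1/2:ℝ)) ω ∂P := by
            apply lintegral_mono; intro ω; exact hGbd k ω
        _ ≤ (∫⁻ ω in s, ((A k ω) ^ (1/2:ℝ)) ^ (2:ℝ) ∂P) ^ (1/2:ℝ) *
            (∫⁻ ω in s, ((B ω) ^ (1/2:ℝ)) ^ (2:ℝ) ∂P) ^ (1/2:ℝ) :=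
            ENNReal.lintegral_mul_le_Lp_mul_Lq _ h2
              ((ENNReal.continuous_rpow_const.measurable.comp (hAmeas k)).aemeasurable)
              ((ENNReal.continuous_rpow_const.measurable.comp hBmeas).aemeasurable)
        _ = (∫⁻ ω in s, A k ω ∂P) ^ (1/2:ℝ) * (∫⁻ ω in s, B ω ∂P) ^ (1/2:ℝ) := by
            have hhalf : ∀ x : ℝ≥0∞, (x ^ (1/2:ℝ)) ^ (2:ℝ) = x := by
              intro x
              rw [← ENNReal.rpow_mul]
              norm_num
            simp only [hhalf]
        _ ≤ (ENNReal.ofReal C) ^ (1/2:ℝ) * ε₂ ^ (1/2:ℝ) := by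
            have h1 : ∫⁻ ω in s, A k ω ∂P ≤ ENNReal.ofReal C :=
              le_trans (setLIntegral_le_lintegral _ _) (hAint k)
            exact mul_le_mul' (ENNReal.rpow_le_rpow h1 (by norm_num))
              (ENNReal.rpow_le_rpow hBs.le (by norm_num))
        _ ≤ ((ENNReal.ofReal C + 1) * ε₂) ^ (1/2:ℝ) := by
            rw [ENNReal.mul_rpow_of_nonneg _ _ (by norm_num)]
            gcongr
            exact le_self_add
        _ ≤ ((ENNReal.ofReal ε) ^ (2:ℝ)) ^ (1/2:ℝ) := by
            gcongr
            rw [hε₂def]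
            exact ENNReal.mul_div_le
        _ = ENNReal.ofReal ε := by
            rw [← ENNReal.rpow_mul]
            norm_num
    exact key
  -- Vitali convergence theorem
  have hG₀mem : MemLp G₀ 1 P := memLp_one_iff_integrable.mpr hG₀int
  have hLp : Tendsto (fun k => eLpNorm (G k - G₀) 1 P) atTop (nhds 0) :=
    tendsto_Lp_finite_of_tendsto_ae le_rfl ENNReal.one_ne_top
      (fun k => (hGint k).aestronglyMeasurable) hG₀mem hui hae
  have hint : Tendsto (fun k => ∫ ω, G k ω ∂P) atTop (nhds (∫ ω, G₀ ω ∂P)) := by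
    refine tendsto_integral_of_L1 G₀ hG₀int.aestronglyMeasurable (Eventually.of_forall hGint) ?_
    have : ∀ k, (∫⁻ ω, ‖G k ω - G₀ ω‖ₑ ∂P) = eLpNorm (G k - G₀) 1 P := by
      intro k
      rw [eLpNorm_one_eq_lintegral_enorm]
      rfl
    simpa [this] using hLp
  -- transfer back to ψ
  have heq1 : ∀ k, ∫ p, f k p * ψ p ∂(P.prod ν) = ∫ ω, G k ω ∂P := by
    intro k
    rw [← hGfub k]
    apply integral_congr_ae
    filter_upwards [hψ'ae] with p hp
    rw [hp]
  have heq2 : ∫ p, g p * ψ p ∂(P.prod ν) = ∫ ω, G₀ ω ∂P := by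
    rw [← hG₀fub]
    apply integral_congr_ae
    filter_upwards [hψ'ae] with p hp
    rw [hp]
  rw [heq2]
  simpa [heq1] using hint
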